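/- If every w_i > 0 and the points X₁,…,Xₙ ∈ {0,1}^q are pairwise distinct, then the binary tree kernel matrix K_{XX} is positive definite (not merely semidefinite). -/

import Mathlib

open Matrix


/-- Binary tree kernel. -/
noncomputable def btKernel {q : ℕ} (w : Fin q → ℝ) (x₁ x₂ : Fin q → Bool) : ℝ :=
  ∑ i : Fin q, w i * (if ∀ j : Fin q, (j : ℕ) ≤ (i : ℕ) → x₁ j = x₂ j then (1 : ℝ) else 0)

/-- Gram matrix of equality indicators is PSD. -/
lemma indicator_gram_posSemidef {n : ℕ} {α : Type*} [Fintype α] [DecidableEq α]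
    (f : Fin n → α) :
    (Matrix.of fun j j' : Fin n => if f j = f j' then (1 : ℝ) else 0).PosSemidef := by
  let B : Matrix α (Fin n) ℝ := Matrix.of fun v j => if f j = v then (1 : ℝ) else 0
  have hB : (Matrix.of fun j j' : Fin n => if f j = f j' then (1 : ℝ) else 0)
      = Bᴴ * B := by
    ext j j'
    simp only [Matrix.mul_apply, Matrix.conjTranspose_apply, Matrix.of_apply, star_trivial, B]
    by_cases h : f j = f j'
    · rw [if_pos h, Finset.sum_eq_single (f j)]
      · simp [h]
      · intro v _ hv
        have : ¬ (f j = v) := fun hh => hv hh.symm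
        simp [this]
      · simp
    · rw [if_neg h]
      symm
      apply Finset.sum_eq_zero
      intro v _
      by_cases h1 : f j = v
      · have : ¬ (f j' = v) := fun hh => h (h1.trans hh.symm)
        simp [this]
      · simp [h1]
  rw [hB]
  exact Matrix.posSemidef_conjTranspose_mul_self B


lemma posSemidef_smul {n : ℕ} {A : Matrix (Fin n) (Fin n) ℝ} (hA : A.PosSemidef)
    {c : ℝ} (hc : 0 ≤ c) : (c • A).PosSemidef := by
  refine Matrix.posSemidef_iff_dotProduct_mulVec.mpr ⟨?_, fun x => ?_⟩
  · show (c • A)ᴴ = c • A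
    rw [Matrix.conjTranspose_smul, hA.1, star_trivial]
  · rw [Matrix.smul_mulVec, dotProduct_smul, smul_eq_mul]
    exact mul_nonneg hc (hA.dotProduct_mulVec_nonneg x)

theorem btKernel_matrix_posDef {q n : ℕ} (hq : 0 < q) (w : Fin q → ℝ)
    (hw : ∀ i, 0 < w i) (X : Fin n → Fin q → Bool) (hX : Function.Injective X) :
    (Matrix.of fun j j' : Fin n => btKernel w (X j) (X j')).PosDef := by
  classical
  let i₀ : Fin q := ⟨q - 1, by omega⟩
  let M : Fin q → Matrix (Fin n) (Fin n) ℝ := fun i =>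
    Matrix.of fun j j' : Fin n =>
      if ∀ k : Fin q, (k : ℕ) ≤ (i : ℕ) → X j k = X j' k then (1 : ℝ) else 0
  have hMpsd : ∀ i, (M i).PosSemidef := by
    intro i
    have key := indicator_gram_posSemidef (f := fun j : Fin n =>
      (fun k : {k : Fin q // (k : ℕ) ≤ (i : ℕ)} => X j k.1))
    have heq : M i = Matrix.of fun j j' : Fin n =>
        if (fun k : {k : Fin q // (k : ℕ) ≤ (i : ℕ)} => X j k.1) =
           (fun k : {k : Fin q // (k : ℕ) ≤ (i : ℕ)} => X j' k.1) then (1 : ℝ) else 0 := by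
      ext j j'
      simp only [Matrix.of_apply, M]
      congr 1
      simp only [eq_iff_iff, funext_iff]
      constructor
      · intro h k; exact h k.1 k.2
      · intro h k hk; exact h ⟨k, hk⟩
    rw [heq]; exact key
  have hdecomp : (Matrix.of fun j j' : Fin n => btKernel w (X j) (X j')) =
      (∑ i ∈ Finset.univ.erase i₀, w i • M i) + w i₀ • M i₀ := by
    rw [Finset.sum_erase_add Finset.univ _ (Finset.mem_univ i₀)]
    ext j j'
    simp only [btKernel, Matrix.sum_apply, Matrix.smul_apply, Matrix.of_apply, smul_eq_mul, M]
  have hMi₀ : M i₀ = 1 := by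
    ext j j'
    have hcond : (∀ k : Fin q, (k : ℕ) ≤ (i₀ : ℕ) → X j k = X j' k) ↔ j = j' := by
      constructor
      · intro h
        apply hX
        funext k
        exact h k (Nat.le_pred_of_lt k.isLt)
      · rintro rfl k _; rfl
    simp only [Matrix.of_apply, Matrix.one_apply, hcond, M]
  have hsum_psd : (∑ i ∈ Finset.univ.erase i₀, w i • M i).PosSemidef := by
    apply Finset.sum_induction (fun i => w i • M i) Matrix.PosSemidef
      (fun A B hA hB => hA.add hB) Matrix.PosSemidef.zero
    intro i _
    exact posSemidef_smul (hMpsd i) (le_of_lt (hw i))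
  have hlast : (w i₀ • M i₀).PosDef := by
    rw [hMi₀]
    have h1 : (1 : Matrix (Fin n) (Fin n) ℝ).PosDef := Matrix.PosDef.one
    refine Matrix.posDef_iff_dotProduct_mulVec.mpr ⟨(posSemidef_smul h1.posSemidef (le_of_lt (hw i₀))).1, fun x hx => ?_⟩
    have h2 := h1.dotProduct_mulVec_pos hx
    rw [Matrix.smul_mulVec, dotProduct_smul]
    exact mul_pos (hw i₀) (by simpa using h2)
  rw [hdecomp]
  refine Matrix.posDef_iff_dotProduct_mulVec.mpr ⟨hsum_psd.1.add hlast.1, fun x hx => ?_⟩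
  rw [Matrix.add_mulVec, dotProduct_add]
  have h1 := hsum_psd.dotProduct_mulVec_nonneg x
  have h2 := hlast.dotProduct_mulVec_pos hx
  have h1' : (0:ℝ) ≤ dotProduct (star x)
      ((∑ i ∈ Finset.univ.erase i₀, w i • M i) *ᵥ x) := by simpa using h1
  have h2' : (0:ℝ) < dotProduct (star x) ((w i₀ • M i₀) *ᵥ x) := by simpa using h2
  exact add_pos_of_nonneg_of_pos h1' h2'
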